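/- Let A, M ∈ Mₙ(F₃) satisfy A³ = A² + A + I, M² = 0, and (A + M)³ = A + M. Then M A M A M A M = M A M + M A M A M. -/
import Mathlib

theorem aux {R : Type*} [Ring R] (A M : R) (h3 : (3:R) = 0)
    (hA : A ^ 3 = A ^ 2 + A + 1) (hM : M ^ 2 = 0)
    (hD : (A + M) ^ 3 = A + M) :
    M * A * M * A * M * A * M = M * A * M + M * A * M * A * M := by
  have hMM : M * M = 0 := by rw [← pow_two]; exact hM
  have hA3 : A * A * A = A * A + A + 1 := by
    rw [show A*A*A = A^3 by noncomm_ring, hA]; noncomm_ring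
  have h3T : ∀ Y : R, Y + Y + Y = 0 := fun Y => by
    calc Y+Y+Y = 3*Y := by noncomm_ring
    _ = 0 := by rw [h3, zero_mul]
  -- key1 : M*A*A*A*M + M*A*M*A*M = M*A*M
  have key1 : M*A*A*A*M + M*A*M*A*M = M*A*M := by
    have h : M * ((A+M)^3 * M) = M * ((A+M) * M) := by rw [hD]
    rw [show M * ((A+M)^3 * M) = M*A*A*A*M + M*A*M*A*M
        + (M*A*A*(M*M) + M*A*(M*M)*M + (M*M)*(A*A*M) + (M*M)*(A*(M*M))
          + (M*M)*(M*A*M) + (M*M)*((M*M)*M)) from by noncomm_ring,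
        show M * ((A+M) * M) = M*A*M + (M*M)*M from by noncomm_ring] at h
    simpa [hMM] using h
  -- key2 : M*A*A*M = -(M*A*M*A*M)
  have key2 : M*A*A*M = -(M*A*M*A*M) := by
    have e1 : M*A*A*A*M = M*A*A*M + M*A*M := by
      calc M*A*A*A*M = M*(A*A*A)*M := by noncomm_ring
      _ = M*(A*A+A+1)*M := by rw [hA3]
      _ = M*A*A*M + M*A*M + M*M := by noncomm_ring
      _ = M*A*A*M + M*A*M := by rw [hMM, add_zero]
    rw [e1] at key1
    -- key1 : M*A*A*M + M*A*M + M*A*M*A*M = M*A*M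
    have h0 : M*A*A*M + M*A*M*A*M = (M*A*A*M + M*A*M + M*A*M*A*M) - M*A*M := by abel
    rw [key1, sub_self] at h0
    exact eq_neg_of_add_eq_zero_left h0
  -- B^4 = B^2
  have hB4 : (A+M)^4 = (A+M)^2 := by rw [pow_succ, hD, ← pow_two]
  -- key3
  have key3 : M*A*A*A*A*M + M*A*A*M*A*M + M*A*M*A*A*M = M*A*A*M := by
    have h : M * ((A+M)^4 * M) = M * ((A+M)^2 * M) := by rw [hB4]
    rw [show M * ((A+M)^4 * M) = M*A*A*A*A*M + M*A*A*M*A*M + M*A*M*A*A*M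
        + (M*A*A*A*(M*M) + M*A*A*((M*M)*M) + M*A*M*A*(M*M) + M*A*(M*M)*A*M
          + M*A*((M*M)*(M*M)) + (M*M)*A*A*A*M + (M*M)*(A*A*(M*M)) + (M*M)*(A*M*A*M)
          + (M*M)*A*(M*M)*M + (M*M)*M*A*A*M + (M*M)*(M*A*(M*M)) + (M*M)*(M*M)*(A*M)
          + (M*M)*(M*M)*(M*M)) from by noncomm_ring,
        show M * ((A+M)^2 * M) = M*A*A*M + (M*A*(M*M) + (M*M)*(A*M) + (M*M)*(M*M))
          from by noncomm_ring] at h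
    simpa [hMM] using h
  have hA4 : A*A*A*A = A*A + A + 1 + (A*A + A) := by
    calc A*A*A*A = (A*A*A)*A := by noncomm_ring
    _ = (A*A+A+1)*A := by rw [hA3]
    _ = A*A*A + (A*A + A) := by noncomm_ring
    _ = (A*A+A+1) + (A*A+A) := by rw [hA3]
  have e4 : M*A*A*A*A*M = M*A*A*M + M*A*M + (M*A*A*M + M*A*M) := by
    calc M*A*A*A*A*M = M*(A*A*A*A)*M := by noncomm_ring
    _ = M*(A*A + A + 1 + (A*A + A))*M := by rw [hA4]
    _ = M*A*A*M + M*A*M + M*M + (M*A*A*M + M*A*M) := by noncomm_ring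
    _ = _ := by rw [hMM, add_zero]
  have e5 : M*A*A*M*A*M = -(M*A*M*A*M*A*M) := by
    calc M*A*A*M*A*M = (M*A*A*M)*A*M := by noncomm_ring
    _ = (-(M*A*M*A*M))*A*M := by rw [key2]
    _ = -(M*A*M*A*M*A*M) := by noncomm_ring
  have e6 : M*A*M*A*A*M = -(M*A*M*A*M*A*M) := by
    calc M*A*M*A*A*M = M*A*(M*A*A*M) := by noncomm_ring
    _ = M*A*(-(M*A*M*A*M)) := by rw [key2]
    _ = -(M*A*M*A*M*A*M) := by noncomm_ring
  rw [e4, e5, e6, key2] at key3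
  -- key3 : -(T2)+T1+(-(T2)+T1) + -T3 + -T3 = -T2  (shapes per rw)
  set T1 := M*A*M
  set T2 := M*A*M*A*M
  set T3 := M*A*M*A*M*A*M
  have hz : (-T2 + T1 + (-T2 + T1) + -T3 + -T3) - (-T2) = 0 := by
    rw [sub_eq_zero]; exact key3
  have hid : T3 - (T1 + T2) =
      ((-T2 + T1 + (-T2 + T1) + -T3 + -T3) - (-T2)) + (T3+T3+T3) - (T1+T1+T1) := by abel
  rw [hz, h3T, h3T] at hid
  simp at hid
  exact sub_eq_zero.mp hid

open Matrix

/-- Step (2): over 𝔽₃, if A³ = A² + A + I, M² = 0 and (A+M)³ = A+M, then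
M A M A M A M = M A M + M A M A M. -/
theorem stmt_15 {n : ℕ} (A M : Matrix (Fin n) (Fin n) (ZMod 3))
    (hA : A ^ 3 = A ^ 2 + A + 1) (hM : M ^ 2 = 0)
    (hD : (A + M) ^ 3 = A + M) :
    M * A * M * A * M * A * M = M * A * M + M * A * M * A * M := by
  have h3 : (3 : Matrix (Fin n) (Fin n) (ZMod 3)) = 0 := by
    have h : (3 : Matrix (Fin n) (Fin n) (ZMod 3))
        = ((3:ℕ) : ZMod 3) • (1 : Matrix (Fin n) (Fin n) (ZMod 3)) := by
      push_cast
      simp [Matrix.smul_one_eq_diagonal]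
      rfl
    rw [h, show ((3:ℕ) : ZMod 3) = 0 from rfl, zero_smul]
  exact aux A M h3 hA hM hD
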